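/- Let J be an n₁×n₁ real matrix and T > 0. If the homogeneous boundary value problem u̇₁ = J(u₁ + μ₁), u₁(0) = 0, with boundary condition B̃₁ μ₁ + C̃₁(μ₁ + u₁(T)) = 0 has only the trivial solution (μ₁, u₁) = (0, 0), then the matrix D̃ = B̃₁ + C̃₁ + C̃₁ J ∫₀ᵀ e^{(T−s)J} ds is invertible. -/

import Mathlib

open Matrix Set

/-- The matrix `∫₀ᵗ e^{(t−s)J} ds`, computed entrywise. -/
noncomputable def expInt {n : ℕ} (J : Matrix (Fin n) (Fin n) ℝ) (t : ℝ) :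
    Matrix (Fin n) (Fin n) ℝ :=
  Matrix.of fun i j => ∫ s in (0:ℝ)..t, NormedSpace.exp ((t - s) • J) i j

attribute [local instance] Matrix.linftyOpNormedRing Matrix.linftyOpNormedAlgebra

/-- The entry evaluation as a continuous linear map. -/
noncomputable def entryCLM {n : ℕ} (i j : Fin n) :
    Matrix (Fin n) (Fin n) ℝ →L[ℝ] ℝ :=
  { toFun := fun M => M i j
    map_add' := fun _ _ => rfl
    map_smul' := fun _ _ => rfl
    cont := (continuous_apply j).comp (continuous_apply i) }

lemma hasDerivAt_exp_entry {n : ℕ} (J : Matrix (Fin n) (Fin n) ℝ) (i j : Fin n) (t : ℝ) :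
    HasDerivAt (fun s : ℝ => NormedSpace.exp (s • J) i j)
      ((J * NormedSpace.exp (t • J)) i j) t :=
  (entryCLM i j).hasFDerivAt.comp_hasDerivAt t (hasDerivAt_exp_smul_const' J t)

lemma continuous_exp_entry {n : ℕ} (J : Matrix (Fin n) (Fin n) ℝ) (i j : Fin n) :
    Continuous (fun s : ℝ => NormedSpace.exp (s • J) i j) := by
  have : Differentiable ℝ (fun s : ℝ => NormedSpace.exp (s • J) i j) :=
    fun t => (hasDerivAt_exp_entry J i j t).differentiableAt
  exact this.continuous

lemma key_identity {n : ℕ} (J : Matrix (Fin n) (Fin n) ℝ) (T : ℝ) :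
    J * expInt J T = NormedSpace.exp (T • J) - 1 := by
  ext i j
  have hInt : ∀ k j : Fin n,
      IntervalIntegrable (fun s : ℝ => NormedSpace.exp ((T - s) • J) k j)
        MeasureTheory.volume 0 T :=
    fun k j => ((continuous_exp_entry J k j).comp (continuous_const.sub continuous_id)).intervalIntegrable 0 T
  have h1 : (J * expInt J T) i j
      = ∫ s in (0:ℝ)..T, ∑ k, J i k * NormedSpace.exp ((T - s) • J) k j := by
    rw [Matrix.mul_apply]
    have he : ∀ k : Fin n, J i k * expInt J T k j
        = ∫ s in (0:ℝ)..T, J i k * NormedSpace.exp ((T - s) • J) k j := by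
      intro k
      simp only [expInt, Matrix.of_apply]
      rw [intervalIntegral.integral_const_mul]
    simp only [he]
    rw [intervalIntegral.integral_finset_sum (fun k _ => (hInt k j).const_mul _)]
  have h2 : ∀ s : ℝ, ∑ k, J i k * NormedSpace.exp ((T - s) • J) k j
      = (J * NormedSpace.exp ((T - s) • J)) i j := by
    intro s; rw [Matrix.mul_apply]
  rw [h1]
  simp only [h2]
  have h3 : (∫ s in (0:ℝ)..T, (J * NormedSpace.exp ((T - s) • J)) i j)
      = ∫ s in (0:ℝ)..T, (J * NormedSpace.exp (s • J)) i j := by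
    have := intervalIntegral.integral_comp_sub_left
      (f := fun s => (J * NormedSpace.exp (s • J)) i j) (a := (0:ℝ)) (b := T) T
    simpa using this
  rw [h3]
  have h4 : (∫ s in (0:ℝ)..T, (J * NormedSpace.exp (s • J)) i j)
      = NormedSpace.exp (T • J) i j - NormedSpace.exp ((0:ℝ) • J) i j := by
    apply intervalIntegral.integral_eq_sub_of_hasDerivAt
    · intro s _
      exact hasDerivAt_exp_entry J i j s
    · apply Continuous.intervalIntegrable
      have : Continuous fun s : ℝ => ∑ k, J i k * NormedSpace.exp (s • J) k j := by
        refine continuous_finset_sum _ (fun k _ => ?_)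
        exact continuous_const.mul (continuous_exp_entry J k j)
      simpa only [Matrix.mul_apply] using this
  rw [h4]
  simp [Matrix.sub_apply, NormedSpace.exp_zero]

/-- if the homogeneous BVP has only the trivial solution, then
`D̃ = B̃₁ + C̃₁ + C̃₁ J ∫₀ᵀ e^{(T−s)J} ds` is invertible. -/
theorem stmt_17 {n₁ : ℕ} (J B₁ C₁ : Matrix (Fin n₁) (Fin n₁) ℝ) (T : ℝ) (hT : 0 < T)
    (htriv : ∀ (μ₁ : Fin n₁ → ℝ) (u₁ u₁' : ℝ → Fin n₁ → ℝ),
      (∀ t ∈ Icc 0 T, HasDerivWithinAt u₁ (u₁' t) (Icc 0 T) t) →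
      ContinuousOn u₁' (Icc 0 T) →
      (∀ t ∈ Icc 0 T, u₁' t = J *ᵥ (u₁ t + μ₁)) →
      u₁ 0 = 0 →
      B₁ *ᵥ μ₁ + C₁ *ᵥ (μ₁ + u₁ T) = 0 →
      μ₁ = 0 ∧ ∀ t ∈ Icc (0:ℝ) T, u₁ t = 0) :
    IsUnit (B₁ + C₁ + C₁ * J * expInt J T) := by
  rw [← Matrix.mulVec_injective_iff_isUnit]
  suffices hker : ∀ μ : Fin n₁ → ℝ, (B₁ + C₁ + C₁ * J * expInt J T) *ᵥ μ = 0 → μ = 0 by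
    intro x y hxy
    have := hker (x - y) (by rw [Matrix.mulVec_sub, hxy, sub_self])
    exact sub_eq_zero.mp this
  intro μ hμ
  set u₁ : ℝ → Fin n₁ → ℝ := fun t => (NormedSpace.exp (t • J) - 1) *ᵥ μ with hu₁
  set u₁' : ℝ → Fin n₁ → ℝ := fun t => (J * NormedSpace.exp (t • J)) *ᵥ μ with hu₁'
  have hderiv : ∀ t : ℝ, HasDerivAt u₁ (u₁' t) t := by
    intro t
    rw [hasDerivAt_pi]
    intro i
    have : ∀ s : ℝ, u₁ s i
        = (∑ k, NormedSpace.exp (s • J) i k * μ k) - ((1 : Matrix (Fin n₁) (Fin n₁) ℝ) *ᵥ μ) i := by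
      intro s
      simp [hu₁, Matrix.sub_mulVec, Matrix.mulVec, dotProduct, Matrix.one_apply,
        ite_mul, one_mul, zero_mul, Finset.sum_ite_eq]
    simp only [this]
    have h2 : u₁' t i = ∑ k, (J * NormedSpace.exp (t • J)) i k * μ k := by
      simp [hu₁', Matrix.mulVec, dotProduct]
    rw [h2]
    exact (HasDerivAt.fun_sum fun k _ => (hasDerivAt_exp_entry J i k t).mul_const (μ k)).sub_const _
  have hcont : Continuous u₁' := by
    apply continuous_pi
    intro i
    have : ∀ t : ℝ, u₁' t i = ∑ k, (J * NormedSpace.exp (t • J)) i k * μ k := by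
      intro t; simp [hu₁', Matrix.mulVec, dotProduct]
    simp only [this]
    refine continuous_finset_sum _ (fun k _ => Continuous.mul ?_ continuous_const)
    have : Continuous fun t : ℝ => ∑ l, J i l * NormedSpace.exp (t • J) l k :=
      continuous_finset_sum _ (fun l _ => continuous_const.mul (continuous_exp_entry J l k))
    simpa only [Matrix.mul_apply] using this
  have hode : ∀ t ∈ Icc (0:ℝ) T, u₁' t = J *ᵥ (u₁ t + μ) := by
    intro t _
    simp only [hu₁, hu₁']
    rw [Matrix.sub_mulVec, Matrix.one_mulVec]
    rw [sub_add_cancel, Matrix.mulVec_mulVec]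
  have hzero : u₁ 0 = 0 := by
    simp [hu₁, NormedSpace.exp_zero, Matrix.sub_mulVec, Matrix.one_mulVec]
  have hbc : B₁ *ᵥ μ + C₁ *ᵥ (μ + u₁ T) = 0 := by
    have hk : (NormedSpace.exp (T • J) - 1 : Matrix (Fin n₁) (Fin n₁) ℝ)
        = J * expInt J T := (key_identity J T).symm
    have huT : u₁ T = (J * expInt J T) *ᵥ μ := by
      simp only [hu₁]
      rw [hk]
    calc B₁ *ᵥ μ + C₁ *ᵥ (μ + u₁ T)
        = B₁ *ᵥ μ + (C₁ *ᵥ μ + C₁ *ᵥ ((J * expInt J T) *ᵥ μ)) := by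
          rw [huT, Matrix.mulVec_add]
      _ = (B₁ + C₁ + C₁ * J * expInt J T) *ᵥ μ := by
          rw [Matrix.mulVec_mulVec, Matrix.add_mulVec, Matrix.add_mulVec, add_assoc,
            Matrix.mul_assoc]
      _ = 0 := hμ
  exact (htriv μ u₁ u₁' (fun t _ => (hderiv t).hasDerivWithinAt) hcont.continuousOn
    hode hzero hbc).1
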